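/- Let (X,μ) be a measure space, p a bounded variable exponent, and q_1 ≤ q_2 variable exponents (pointwise). Then for every sequence g = {g_k}_{k∈ℤ} ⊆ L^{p(·)}(X,μ): ‖g‖_{ℓ^{q_2(·)}(L^{p(·)})} ≤ ‖g‖_{ℓ^{q_1(·)}(L^{p(·)})} and ‖g‖_{L^{p(·)}(ℓ^{q_2(·)})} ≤ ‖g‖_{L^{p(·)}(ℓ^{q_1(·)})}; in particular ℓ^{q_1(·)}(L^{p(·)}) ↪ ℓ^{q_2(·)}(L^{p(·)}) and L^{p(·)}(ℓ^{q_1(·)}) ↪ L^{p(·)}(ℓ^{q_2(·)}). -/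

import Mathlib

open MeasureTheory Metric ENNReal

noncomputable section

/-- The semi-modular `∫ f(x)^{p(x)} dμ` of an `ℝ≥0∞`-valued function. -/
def modE {X : Type*} [MeasurableSpace X] (μ : Measure X) (p : X → ℝ) (f : X → ℝ≥0∞) : ℝ≥0∞ :=
  ∫⁻ x, f x ^ p x ∂μ

/-- The Luxemburg quasi-norm associated to the variable exponent `p`. -/
def luxE {X : Type*} [MeasurableSpace X] (μ : Measure X) (p : X → ℝ) (f : X → ℝ≥0∞) : ℝ≥0∞ :=
  sInf {l : ℝ≥0∞ | 0 < l ∧ l ≠ ⊤ ∧ modE μ p (fun x => f x / l) ≤ 1}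

/-- The Luxemburg quasi-norm of a real-valued function. -/
def luxR {X : Type*} [MeasurableSpace X] (μ : Measure X) (p : X → ℝ) (u : X → ℝ) : ℝ≥0∞ :=
  luxE μ p (fun x => (‖u x‖₊ : ℝ≥0∞))

/-- `g` is a scalar `s(·)`-gradient of `u` on the set `E`. -/
def IsSGradOn {X : Type*} [MeasurableSpace X] [PseudoMetricSpace X] (μ : Measure X)
    (E : Set X) (s : X → ℝ) (u : X → ℝ) (g : X → ℝ≥0∞) : Prop :=
  Measurable g ∧ ∃ N : Set X, N ⊆ E ∧ μ N = 0 ∧ ∀ x ∈ E \ N, ∀ y ∈ E \ N,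
    ENNReal.ofReal |u x - u y| ≤
      ENNReal.ofReal (dist x y ^ s x) * g x + ENNReal.ofReal (dist x y ^ s y) * g y

/-- `{g k}` is a vector (fractional) `s(·)`-gradient of `u` on the set `E`. -/
def IsVGradOn {X : Type*} [MeasurableSpace X] [PseudoMetricSpace X] (μ : Measure X)
    (E : Set X) (s : X → ℝ) (u : X → ℝ) (g : ℤ → X → ℝ≥0∞) : Prop :=
  (∀ k, Measurable (g k)) ∧ ∃ N : Set X, N ⊆ E ∧ μ N = 0 ∧
    ∀ x ∈ E \ N, ∀ y ∈ E \ N, ∀ k : ℤ,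
      (2 : ℝ) ^ (-(k : ℝ) - 1) ≤ dist x y → dist x y < (2 : ℝ) ^ (-(k : ℝ)) →
      ENNReal.ofReal |u x - u y| ≤
        ENNReal.ofReal (dist x y ^ s x) * g k x + ENNReal.ofReal (dist x y ^ s y) * g k y

/-- Pointwise `ℓ^{q}`-norm of a sequence, `q ∈ (0,∞]`. -/
def seqNormE (q : ℝ≥0∞) (v : ℤ → ℝ≥0∞) : ℝ≥0∞ :=
  if q = ⊤ then ⨆ k, v k else (∑' k, v k ^ q.toReal) ^ (1 / q.toReal)

/-- The mixed `L^{p(·)}(ℓ^{q(·)})` quasi-norm. -/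
def LpEllNorm {X : Type*} [MeasurableSpace X] (μ : Measure X) (p : X → ℝ) (q : X → ℝ≥0∞)
    (g : ℤ → X → ℝ≥0∞) : ℝ≥0∞ :=
  luxE μ p (fun x => seqNormE (q x) (fun k => g k x))

/-- The semi-modular of the mixed `ℓ^{q(·)}(L^{p(·)})` space. -/
def ellLpMod {X : Type*} [MeasurableSpace X] (μ : Measure X) (p : X → ℝ) (q : X → ℝ≥0∞)
    (g : ℤ → X → ℝ≥0∞) : ℝ≥0∞ :=
  ∑' k : ℤ, sInf {l : ℝ≥0∞ | 0 < l ∧ l ≠ ⊤ ∧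
    modE μ p (fun x => g k x / l ^ (1 / q x).toReal) ≤ 1}

/-- The mixed `ℓ^{q(·)}(L^{p(·)})` quasi-norm. -/
def ellLpNorm {X : Type*} [MeasurableSpace X] (μ : Measure X) (p : X → ℝ) (q : X → ℝ≥0∞)
    (g : ℤ → X → ℝ≥0∞) : ℝ≥0∞ :=
  sInf {l : ℝ≥0∞ | 0 < l ∧ l ≠ ⊤ ∧ ellLpMod μ p q (fun k x => g k x / l) ≤ 1}

/-- Quasi-seminorm of the homogeneous variable Hajłasz–Sobolev space `Ṁ^{s(·),p(·)}(E)`. -/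
def MNormOn {X : Type*} [MeasurableSpace X] [PseudoMetricSpace X] (μ : Measure X)
    (E : Set X) (p s : X → ℝ) (u : X → ℝ) : ℝ≥0∞ :=
  sInf ((fun g => luxE (μ.restrict E) p g) '' {g | IsSGradOn μ E s u g})

/-- Quasi-seminorm of the homogeneous Hajłasz–Triebel–Lizorkin space `Ṁ^{s(·)}_{p(·),q(·)}(E)`. -/
def TLNormOn {X : Type*} [MeasurableSpace X] [PseudoMetricSpace X] (μ : Measure X)
    (E : Set X) (p : X → ℝ) (q : X → ℝ≥0∞) (s : X → ℝ) (u : X → ℝ) : ℝ≥0∞ :=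
  sInf ((fun g => LpEllNorm (μ.restrict E) p q g) '' {g | IsVGradOn μ E s u g})

/-- Quasi-seminorm of the homogeneous Hajłasz–Besov space `Ṅ^{s(·)}_{p(·),q(·)}(E)`. -/
def BNormOn {X : Type*} [MeasurableSpace X] [PseudoMetricSpace X] (μ : Measure X)
    (E : Set X) (p : X → ℝ) (q : X → ℝ≥0∞) (s : X → ℝ) (u : X → ℝ) : ℝ≥0∞ :=
  sInf ((fun g => ellLpNorm (μ.restrict E) p q g) '' {g | IsVGradOn μ E s u g})





section aux
variable {X : Type*} [MeasurableSpace X] {μ : Measure X} {p : X → ℝ}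

lemma modE_mono_ae (hp0 : ∀ᵐ x ∂μ, 0 ≤ p x) {f g : X → ℝ≥0∞}
    (hfg : ∀ᵐ x ∂μ, f x ≤ g x) : modE μ p f ≤ modE μ p g := by
  refine lintegral_mono_ae ?_
  filter_upwards [hp0, hfg] with x h1 h2
  exact ENNReal.rpow_le_rpow h2 h1

/-- Feasibility predicate for the inner Luxemburg-type infimum. -/
def Feas (μ : Measure X) (p : X → ℝ) (q : X → ℝ≥0∞) (h : X → ℝ≥0∞) (l : ℝ≥0∞) : Prop :=
  0 < l ∧ l ≠ ⊤ ∧ modE μ p (fun x => h x / l ^ (1 / q x).toReal) ≤ 1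

lemma feas_mono_l (hp0 : ∀ᵐ x ∂μ, 0 ≤ p x) {q : X → ℝ≥0∞} {h : X → ℝ≥0∞} {l l' : ℝ≥0∞}
    (hl : Feas μ p q h l) (hll' : l ≤ l') (hl' : l' ≠ ⊤) : Feas μ p q h l' := by
  refine ⟨lt_of_lt_of_le hl.1 hll', hl', le_trans (modE_mono_ae hp0 ?_) hl.2.2⟩
  filter_upwards with x
  exact ENNReal.div_le_div_left (ENNReal.rpow_le_rpow hll' ENNReal.toReal_nonneg) _

lemma feas_scale {A : ℝ} (hA : 0 < A) {q : X → ℝ≥0∞} (haq : ∀ᵐ x ∂μ, (1 / q x).toReal ≤ A)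
    (hp0 : ∀ᵐ x ∂μ, 0 ≤ p x) {c : ℝ≥0∞} (hc0 : c ≠ 0) (hc1 : c ≤ 1)
    {h : X → ℝ≥0∞} {l : ℝ≥0∞} (hl : Feas μ p q h l) :
    Feas μ p q (fun x => c * h x) (c ^ (1 / A) * l) := by
  have hct : c ≠ ⊤ := ne_top_of_le_ne_top one_ne_top hc1
  have hd0 : c ^ (1 / A) ≠ 0 := (ENNReal.rpow_pos (pos_iff_ne_zero.mpr hc0) hct).ne'
  have hdt : c ^ (1 / A) ≠ ⊤ :=
    ne_top_of_le_ne_top one_ne_top (ENNReal.rpow_le_one hc1 (by positivity))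
  refine ⟨ENNReal.mul_pos hd0 hl.1.ne', ENNReal.mul_ne_top hdt hl.2.1, ?_⟩
  refine le_trans (modE_mono_ae hp0 ?_) hl.2.2
  filter_upwards [haq] with x hx
  set a := (1 / q x).toReal with ha
  have ha0 : 0 ≤ a := ENNReal.toReal_nonneg
  have hrw : (c ^ (1 / A) * l) ^ a = c ^ (a / A) * l ^ a := by
    rw [ENNReal.mul_rpow_of_nonneg _ _ ha0, ← ENNReal.rpow_mul, one_div_mul_eq_div]
  rw [hrw]
  have he0 : l ^ a ≠ 0 := (ENNReal.rpow_pos hl.1 hl.2.1).ne'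
  have het : l ^ a ≠ ⊤ := ENNReal.rpow_ne_top_of_nonneg ha0 hl.2.1
  have hd0' : c ^ (a / A) ≠ 0 := (ENNReal.rpow_pos (pos_iff_ne_zero.mpr hc0) hct).ne'
  have hdt' : c ^ (a / A) ≠ ⊤ :=
    ne_top_of_le_ne_top one_ne_top (ENNReal.rpow_le_one hc1 (by positivity))
  have heq : c * h x / (c ^ (a / A) * l ^ a) = c / c ^ (a / A) * (h x / l ^ a) := by
    rw [div_eq_mul_inv (c * h x), ENNReal.mul_inv (Or.inl hd0') (Or.inl hdt'),
      div_eq_mul_inv c, div_eq_mul_inv (h x)]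
    ring
  rw [heq]
  have hcle : c / c ^ (a / A) ≤ 1 := by
    refine ENNReal.div_le_of_le_mul ?_
    rw [one_mul]
    calc c = c ^ (1 : ℝ) := (ENNReal.rpow_one c).symm
    _ ≤ c ^ (a / A) := ENNReal.rpow_le_rpow_of_exponent_ge hc1 (by
        rw [div_le_one hA]; exact hx)
  calc c / c ^ (a / A) * (h x / l ^ a) ≤ 1 * (h x / l ^ a) := by gcongr
  _ = h x / l ^ a := one_mul _

def inn (μ : Measure X) (p : X → ℝ) (q : X → ℝ≥0∞) (h : X → ℝ≥0∞) : ℝ≥0∞ :=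
  sInf {l | Feas μ p q h l}

lemma inn_scale {A : ℝ} (hA : 0 < A) {q : X → ℝ≥0∞} (haq : ∀ᵐ x ∂μ, (1 / q x).toReal ≤ A)
    (hp0 : ∀ᵐ x ∂μ, 0 ≤ p x) {c : ℝ≥0∞} (hc0 : c ≠ 0) (hc1 : c ≤ 1) (h : X → ℝ≥0∞) :
    inn μ p q (fun x => c * h x) ≤ c ^ (1 / A) * inn μ p q h := by
  have hd0 : c ^ (1 / A) ≠ 0 :=
    (ENNReal.rpow_pos (pos_iff_ne_zero.mpr hc0) (ne_top_of_le_ne_top one_ne_top hc1)).ne'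
  have hdt : c ^ (1 / A) ≠ ⊤ :=
    ne_top_of_le_ne_top one_ne_top (ENNReal.rpow_le_one hc1 (by positivity))
  rcases Set.eq_empty_or_nonempty {l | Feas μ p q h l} with hS | hS
  · have : inn μ p q h = ⊤ := by rw [inn, hS, sInf_empty]
    rw [this, ENNReal.mul_top (by simpa using hd0)]
    exact le_top
  · have key : ∀ l ∈ {l | Feas μ p q h l}, inn μ p q (fun x => c * h x) ≤ c ^ (1 / A) * l :=
      fun l hl => sInf_le (feas_scale hA haq hp0 hc0 hc1 hl)
    have h2 : inn μ p q (fun x => c * h x) / c ^ (1 / A) ≤ inn μ p q h :=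
      le_sInf fun l hl => ENNReal.div_le_of_le_mul ((key l hl).trans_eq (mul_comm _ _))
    calc inn μ p q (fun x => c * h x)
        = inn μ p q (fun x => c * h x) / c ^ (1 / A) * c ^ (1 / A) :=
          (ENNReal.div_mul_cancel hd0 hdt).symm
    _ ≤ inn μ p q h * c ^ (1 / A) := by gcongr
    _ = c ^ (1 / A) * inn μ p q h := mul_comm _ _

lemma inn_swap {q1 q2 : X → ℝ≥0∞} (hp0 : ∀ᵐ x ∂μ, 0 ≤ p x)
    (hq : ∀ᵐ x ∂μ, (1 / q2 x).toReal ≤ (1 / q1 x).toReal) {h : X → ℝ≥0∞}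
    (hlt : inn μ p q1 h < 1) : inn μ p q2 h ≤ inn μ p q1 h := by
  by_contra hcon
  push_neg at hcon
  obtain ⟨lam, hl1, hl2⟩ := exists_between (lt_min hlt hcon)
  have hlam1 : lam < 1 := lt_of_lt_of_le hl2 (min_le_left _ _)
  have hlam2 : lam < inn μ p q2 h := lt_of_lt_of_le hl2 (min_le_right _ _)
  obtain ⟨l0, hl0, hl0lam⟩ := sInf_lt_iff.mp hl1
  have hfeas1 : Feas μ p q1 h lam := feas_mono_l hp0 hl0 hl0lam.le (hlam1.trans_le le_top).ne
  have hfeas2 : Feas μ p q2 h lam := by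
    refine ⟨hfeas1.1, hfeas1.2.1, le_trans (modE_mono_ae hp0 ?_) hfeas1.2.2⟩
    filter_upwards [hq] with x hx
    exact ENNReal.div_le_div_left (ENNReal.rpow_le_rpow_of_exponent_ge hlam1.le hx) _
  have hmem : lam ∈ {l | Feas μ p q2 h l} := hfeas2
  exact absurd (sInf_le hmem) (not_le.mpr hlam2)

end aux



lemma seqNormE_anti {r s : ℝ≥0∞} (hr0 : r ≠ 0) (hrs : r ≤ s) (v : ℤ → ℝ≥0∞) :
    seqNormE s v ≤ seqNormE r v := by
  by_cases hrt : r = ⊤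
  · subst hrt
    rw [top_le_iff.mp hrs]
  have hrpos : 0 < r.toReal := ENNReal.toReal_pos hr0 hrt
  have hself : ∀ k, v k ≤ (∑' j, v j ^ r.toReal) ^ (1 / r.toReal) := by
    intro k
    calc v k = (v k ^ r.toReal) ^ (1 / r.toReal) := by
          rw [← ENNReal.rpow_mul, mul_one_div_cancel hrpos.ne', ENNReal.rpow_one]
    _ ≤ _ := ENNReal.rpow_le_rpow (ENNReal.le_tsum k) (by positivity)
  by_cases hst : s = ⊤
  · rw [seqNormE, seqNormE, if_pos hst, if_neg hrt]
    exact iSup_le hself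
  rw [seqNormE, seqNormE, if_neg hst, if_neg hrt]
  have hs0 : s ≠ 0 := fun h0 => hr0 (le_antisymm (h0 ▸ hrs) zero_le)
  have hspos : 0 < s.toReal := ENNReal.toReal_pos hs0 hst
  have hrs' : r.toReal ≤ s.toReal := ENNReal.toReal_mono hst hrs
  set T := (∑' j, v j ^ r.toReal) ^ (1 / r.toReal) with hT
  by_cases hT0 : T = 0
  · have hsum0 : ∑' j, v j ^ r.toReal = 0 := by
      rcases ENNReal.rpow_eq_zero_iff.mp hT0 with ⟨h1, _⟩ | ⟨_, h2⟩
      · exact h1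
      · exfalso; have : (0:ℝ) < 1 / r.toReal := by positivity
        linarith
    have hv : ∀ k, v k = 0 := by
      intro k
      have hk := ENNReal.tsum_eq_zero.mp hsum0 k
      rcases ENNReal.rpow_eq_zero_iff.mp hk with ⟨h1, _⟩ | ⟨_, h2⟩
      · exact h1
      · exfalso; linarith
    simp only [hv, ENNReal.zero_rpow_of_pos hspos, tsum_zero]
    rw [ENNReal.zero_rpow_of_pos (by positivity)]
    exact zero_le
  by_cases hTt : T = ⊤
  · rw [hTt]; exact le_top
  have hTs0 : T ^ s.toReal ≠ 0 := (ENNReal.rpow_pos (pos_iff_ne_zero.mpr hT0) hTt).ne'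
  have hTst : T ^ s.toReal ≠ ⊤ := ENNReal.rpow_ne_top_of_nonneg hspos.le hTt
  have hTr0 : T ^ r.toReal ≠ 0 := (ENNReal.rpow_pos (pos_iff_ne_zero.mpr hT0) hTt).ne'
  have hTrt : T ^ r.toReal ≠ ⊤ := ENNReal.rpow_ne_top_of_nonneg hrpos.le hTt
  have hsumT : ∑' j, v j ^ r.toReal = T ^ r.toReal := by
    rw [hT, ← ENNReal.rpow_mul, one_div_mul_cancel hrpos.ne', ENNReal.rpow_one]
  have hbound : ∑' j, (v j / T) ^ s.toReal ≤ 1 := by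
    calc ∑' j, (v j / T) ^ s.toReal ≤ ∑' j, (v j / T) ^ r.toReal := by
          refine ENNReal.tsum_le_tsum fun j => ?_
          refine ENNReal.rpow_le_rpow_of_exponent_ge ?_ hrs'
          exact ENNReal.div_le_of_le_mul (by rw [one_mul]; exact hself j)
    _ = (∑' j, v j ^ r.toReal) / T ^ r.toReal := by
          rw [div_eq_mul_inv (∑' j, v j ^ r.toReal), ← ENNReal.tsum_mul_right]
          exact tsum_congr fun j => by
            rw [ENNReal.div_rpow_of_nonneg _ _ hrpos.le, div_eq_mul_inv]
    _ = 1 := by rw [hsumT, ENNReal.div_self hTr0 hTrt]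
  have hsum_le : (∑' j, v j ^ s.toReal) / T ^ s.toReal ≤ 1 := by
    calc (∑' j, v j ^ s.toReal) / T ^ s.toReal = ∑' j, (v j / T) ^ s.toReal := by
          rw [div_eq_mul_inv (∑' j, v j ^ s.toReal), ← ENNReal.tsum_mul_right]
          exact tsum_congr fun j => by
            rw [ENNReal.div_rpow_of_nonneg _ _ hspos.le, div_eq_mul_inv]
    _ ≤ 1 := hbound
  have hfin : ∑' j, v j ^ s.toReal ≤ T ^ s.toReal := by
    have := (ENNReal.div_le_iff hTs0 hTst).mp hsum_le
    rwa [one_mul] at this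
  calc (∑' j, v j ^ s.toReal) ^ (1 / s.toReal)
      ≤ (T ^ s.toReal) ^ (1 / s.toReal) := ENNReal.rpow_le_rpow hfin (by positivity)
  _ = T := by rw [← ENNReal.rpow_mul, mul_one_div_cancel hspos.ne', ENNReal.rpow_one]

section aux3
variable {X : Type*} [MeasurableSpace X] {μ : Measure X} {p : X → ℝ}

lemma luxE_mono_ae (hp0 : ∀ᵐ x ∂μ, 0 ≤ p x) {f g : X → ℝ≥0∞}
    (hfg : ∀ᵐ x ∂μ, f x ≤ g x) : luxE μ p f ≤ luxE μ p g := by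
  refine sInf_le_sInf fun l hl => ?_
  obtain ⟨h1, h2, h3⟩ := hl
  refine ⟨h1, h2, le_trans (modE_mono_ae hp0 ?_) h3⟩
  filter_upwards [hfg] with x hx
  exact ENNReal.div_le_div_right hx _

end aux3

/-- Monotonicity of the mixed Lebesgue-sequence quasi-norms in the sequence exponent:
if `q₁ ≤ q₂` pointwise, then the `ℓ^{q₂(·)}(L^{p(·)})` and `L^{p(·)}(ℓ^{q₂(·)})` quasi-norms are
dominated by the corresponding ones with exponent `q₁`. -/
theorem mixed_norm_monotone {X : Type*} [MeasurableSpace X] (μ : Measure X) (p : X → ℝ)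
    (hp : ∃ c C : ℝ, 0 < c ∧ ∀ᵐ x ∂μ, c ≤ p x ∧ p x ≤ C)
    (q1 q2 : X → ℝ≥0∞) (hq1 : ∃ ε : ℝ≥0∞, 0 < ε ∧ ∀ᵐ x ∂μ, ε ≤ q1 x)
    (hle : ∀ x, q1 x ≤ q2 x)
    (g : ℤ → X → ℝ≥0∞) (hg : ∀ k, Measurable (g k)) (hgL : ∀ k, luxE μ p (g k) < ⊤) :
    ellLpNorm μ p q2 g ≤ ellLpNorm μ p q1 g ∧ LpEllNorm μ p q2 g ≤ LpEllNorm μ p q1 g := by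
  obtain ⟨c0, C, hc0, hpC⟩ := hp
  obtain ⟨ε, hε, hεq⟩ := hq1
  have hp0 : ∀ᵐ x ∂μ, 0 ≤ p x := by
    filter_upwards [hpC] with x hx
    linarith [hx.1]
  set A : ℝ := (1 / ε).toReal + 1 with hAdef
  have hApos : 0 < A := by positivity
  have hq1top : (1 : ℝ≥0∞) / ε ≠ ⊤ := by
    simp [ENNReal.div_eq_top, hε.ne']
  have haq1 : ∀ᵐ x ∂μ, (1 / q1 x).toReal ≤ A := by
    filter_upwards [hεq] with x hx
    have h1 : (1 : ℝ≥0∞) / q1 x ≤ 1 / ε := ENNReal.div_le_div_left hx 1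
    have h2 := ENNReal.toReal_mono hq1top h1
    rw [hAdef]; linarith
  have haq12 : ∀ᵐ x ∂μ, (1 / q2 x).toReal ≤ (1 / q1 x).toReal := by
    filter_upwards [hεq] with x hx
    have h1 : (1 : ℝ≥0∞) / q1 x ≤ 1 / ε := ENNReal.div_le_div_left hx 1
    exact ENNReal.toReal_mono (ne_top_of_le_ne_top hq1top h1) (ENNReal.div_le_div_left (hle x) 1)
  constructor
  · refine le_sInf fun l hl => ?_
    obtain ⟨hl0, hlt, hlm⟩ := hl
    have hlm' : ∑' k, inn μ p q1 (fun x => g k x / l) ≤ 1 := hlm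
    by_contra hcon
    push_neg at hcon
    obtain ⟨l', hll', hl'lt⟩ := exists_between hcon
    have hl't : l' ≠ ⊤ := hl'lt.ne_top
    have hc : l / l' ≠ 0 := (ENNReal.div_pos hl0.ne' hl't).ne'
    have hc1 : l / l' < 1 := by
      rw [ENNReal.div_lt_iff (Or.inl (hl0.trans hll').ne') (Or.inl hl't), one_mul]
      exact hll'
    have hd1 : (l / l') ^ (1 / A) < 1 := ENNReal.rpow_lt_one hc1 (by positivity)
    have hrw : ∀ k : ℤ, (fun x => g k x / l') = fun x => (l / l') * (g k x / l) := by
      intro k; funext x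
      rw [div_eq_mul_inv (g k x) l', div_eq_mul_inv l, div_eq_mul_inv (g k x) l]
      have h1 : l * l'⁻¹ * (g k x * l⁻¹) = g k x * l'⁻¹ * (l * l⁻¹) := by ring
      rw [h1, ENNReal.mul_inv_cancel hl0.ne' hlt, mul_one]
    have hmk : ∀ k : ℤ, inn μ p q1 (fun x => g k x / l) ≤ 1 :=
      fun k => le_trans (ENNReal.le_tsum k) hlm'
    have hin : ∀ k : ℤ, inn μ p q2 (fun x => g k x / l') ≤
        (l / l') ^ (1 / A) * inn μ p q1 (fun x => g k x / l) := by
      intro k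
      have h1 : inn μ p q1 (fun x => g k x / l') ≤
          (l / l') ^ (1 / A) * inn μ p q1 (fun x => g k x / l) := by
        rw [hrw k]
        exact inn_scale hApos haq1 hp0 hc hc1.le _
      have h2 : inn μ p q1 (fun x => g k x / l') < 1 := by
        refine lt_of_le_of_lt (h1.trans ?_) hd1
        calc (l / l') ^ (1 / A) * inn μ p q1 (fun x => g k x / l)
            ≤ (l / l') ^ (1 / A) * 1 := by gcongr; exact hmk k
        _ = (l / l') ^ (1 / A) := mul_one _
      exact le_trans (inn_swap hp0 haq12 h2) h1
    have hmem : l' ∈ {t : ℝ≥0∞ | 0 < t ∧ t ≠ ⊤ ∧ ellLpMod μ p q2 (fun k x => g k x / t) ≤ 1} := by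
      refine ⟨hl0.trans hll', hl't, ?_⟩
      show ∑' k, inn μ p q2 (fun x => g k x / l') ≤ 1
      calc ∑' k, inn μ p q2 (fun x => g k x / l')
          ≤ ∑' k, (l / l') ^ (1 / A) * inn μ p q1 (fun x => g k x / l) :=
            ENNReal.tsum_le_tsum hin
      _ = (l / l') ^ (1 / A) * ∑' k, inn μ p q1 (fun x => g k x / l) := ENNReal.tsum_mul_left
      _ ≤ (l / l') ^ (1 / A) * 1 := by gcongr
      _ ≤ 1 := by rw [mul_one]; exact hd1.le
    exact absurd (sInf_le hmem) (not_le.mpr hl'lt)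
  · refine luxE_mono_ae hp0 ?_
    filter_upwards [hεq] with x hx
    refine seqNormE_anti ?_ (hle x) _
    intro h0
    rw [h0, le_zero_iff] at hx
    exact hε.ne' hx


end
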